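/- Let R be a Dedekind domain with fraction field K, let I be a nonzero integral ideal, and suppose [a:b], [a':b'] ∈ P¹(K) satisfy aI + bR = λ(a'I + b'R) for some λ ∈ K^×. Then there exists a matrix M = (x y; z t) with x, t ∈ R, y ∈ I⁻¹, z ∈ I, determinant xt − yz = 1, and M·[a':b'] = [a:b]. -/

import Mathlib

open FractionalIdeal nonZeroDivisors

private lemma extract_span_mul {R K : Type} [CommRing R] [Field K]
    [Algebra R K] [IsFractionRing R K] {a u : K} {M : FractionalIdeal R⁰ K}
    (h : u ∈ spanSingleton R⁰ a * M) : ∃ p ∈ M, a * p = u := by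
  rw [← mem_coe, coe_mul, coe_spanSingleton] at h
  exact Submodule.mem_span_singleton_mul.mp h

/-- Injectivity step: if `aI + bR = λ(a'I + b'R)` for some `λ ∈ K^×`, then there
is a matrix `M = (x y; z t)` with `x, t ∈ R`, `y ∈ I⁻¹`, `z ∈ I`, determinant
`xt − yz = 1`, carrying `[a' : b']` to `[a : b]` in `ℙ¹(K)`. -/
theorem matrix_carrying_point_to_point
    (R K : Type) [CommRing R] [IsDedekindDomain R] [Field K] [Algebra R K]
    [IsFractionRing R K] (I : Ideal R) (hI : I ≠ 0)
    (a b a' b' : K) (hab : ¬(a = 0 ∧ b = 0)) (hab' : ¬(a' = 0 ∧ b' = 0))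
    (lam : Kˣ)
    (hlam : spanSingleton R⁰ a * (I : FractionalIdeal R⁰ K) + spanSingleton R⁰ b =
      spanSingleton R⁰ (lam : K) *
        (spanSingleton R⁰ a' * (I : FractionalIdeal R⁰ K) + spanSingleton R⁰ b')) :
    ∃ x y z t : K,
      x ∈ (1 : FractionalIdeal R⁰ K) ∧ t ∈ (1 : FractionalIdeal R⁰ K) ∧
      y ∈ ((I : FractionalIdeal R⁰ K))⁻¹ ∧ z ∈ (I : FractionalIdeal R⁰ K) ∧
      x * t - y * z = 1 ∧
      ∃ c : Kˣ, x * a' + y * b' = (c : K) * a ∧ z * a' + t * b' = (c : K) * b := by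
  classical
  set If : FractionalIdeal R⁰ K := (I : FractionalIdeal R⁰ K) with hIfdef
  have hIF : If ≠ 0 := coeIdeal_ne_zero.mpr hI
  have hIinv : If * If⁻¹ = 1 := mul_inv_cancel₀ hIF
  set J : FractionalIdeal R⁰ K := spanSingleton R⁰ a * If + spanSingleton R⁰ b with hJdef
  set J' : FractionalIdeal R⁰ K := spanSingleton R⁰ a' * If + spanSingleton R⁰ b' with hJ'def
  -- basic inclusions
  have hle1 : spanSingleton R⁰ a * If ≤ J := by
    rw [hJdef, ← sup_eq_add]; exact le_sup_left
  have hle2 : spanSingleton R⁰ b ≤ J := by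
    rw [hJdef, ← sup_eq_add]; exact le_sup_right
  have hle1' : spanSingleton R⁰ a' * If ≤ J' := by
    rw [hJ'def, ← sup_eq_add]; exact le_sup_left
  have hle2' : spanSingleton R⁰ b' ≤ J' := by
    rw [hJ'def, ← sup_eq_add]; exact le_sup_right
  -- J' ≠ 0
  obtain ⟨i, hiI, hi0⟩ := Submodule.exists_mem_ne_zero_of_ne_bot hI
  have hiK : algebraMap R K i ∈ If := by
    rw [hIfdef]; exact (mem_coeIdeal _).mpr ⟨i, hiI, rfl⟩
  have hiK0 : algebraMap R K i ≠ 0 := by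
    intro h
    exact hi0 ((injective_iff_map_eq_zero _).mp (IsFractionRing.injective R K) i h)
  have hJ'0 : J' ≠ 0 := by
    intro h0
    rcases not_and_or.mp hab' with h | h
    · have : a' * algebraMap R K i ∈ J' :=
        hle1' (mul_mem_mul (mem_spanSingleton_self R⁰ a') hiK)
      rw [h0] at this
      simp only [mem_zero_iff, mul_eq_zero] at this
      rcases this with h1 | h1
      · exact h h1
      · exact hiK0 h1
    · have : b' ∈ J' := hle2' (mem_spanSingleton_self R⁰ b')
      rw [h0] at this
      simp only [mem_zero_iff] at this
      exact h this
  have hJ0 : J ≠ 0 := by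
    rw [hlam]
    exact mul_ne_zero (spanSingleton_ne_zero_iff.mpr lam.ne_zero) hJ'0
  have hJinv : J * J⁻¹ = 1 := mul_inv_cancel₀ hJ0
  have hJ'inv : J' * J'⁻¹ = 1 := mul_inv_cancel₀ hJ'0
  -- extract p, q with a*p + b*q = 1, p ∈ I·J⁻¹, q ∈ J⁻¹
  have hsplit : J * J⁻¹ = spanSingleton R⁰ a * (If * J⁻¹) + spanSingleton R⁰ b * J⁻¹ := by
    conv_lhs => rw [hJdef]
    rw [add_mul, mul_assoc]
  have hone : (1 : K) ∈ spanSingleton R⁰ a * (If * J⁻¹) + spanSingleton R⁰ b * J⁻¹ := by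
    rw [← hsplit, hJinv]; exact one_mem_one _
  obtain ⟨u, hu, v, hv, huv⟩ := (mem_add _ _ _).mp hone
  obtain ⟨p, hp, hpu⟩ := extract_span_mul hu
  obtain ⟨q, hq, hqv⟩ := extract_span_mul hv
  have hpq : a * p + b * q = 1 := by rw [hpu, hqv, huv]
  -- extract p', q' with a'*p' + b'*q' = 1, p' ∈ I·J'⁻¹, q' ∈ J'⁻¹
  have hsplit' : J' * J'⁻¹ = spanSingleton R⁰ a' * (If * J'⁻¹) + spanSingleton R⁰ b' * J'⁻¹ := by
    conv_lhs => rw [hJ'def]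
    rw [add_mul, mul_assoc]
  have hone' : (1 : K) ∈ spanSingleton R⁰ a' * (If * J'⁻¹) + spanSingleton R⁰ b' * J'⁻¹ := by
    rw [← hsplit', hJ'inv]; exact one_mem_one _
  obtain ⟨u', hu', v', hv', huv'⟩ := (mem_add _ _ _).mp hone'
  obtain ⟨p', hp', hpu'⟩ := extract_span_mul hu'
  obtain ⟨q', hq', hqv'⟩ := extract_span_mul hv'
  have hpq' : a' * p' + b' * q' = 1 := by rw [hpu', hqv', huv']
  -- λ-facts
  set lamK : K := (lam : K) with hlamK
  set lamI : K := ((lam⁻¹ : Kˣ) : K) with hlamI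
  have hll : lamK * lamI = 1 := Units.mul_inv lam
  have hll' : lamI * lamK = 1 := by rw [mul_comm]; exact hll
  have hJJ' : J * J'⁻¹ = spanSingleton R⁰ lamK := by
    conv_lhs => rw [hlam]
    rw [mul_assoc, hJ'inv, mul_one]
  have hJ'eq : J' = spanSingleton R⁰ lamI * J := by
    rw [hlam, ← mul_assoc, spanSingleton_mul_spanSingleton, hll', spanSingleton_one, one_mul]
  have hJ'J : J' * J⁻¹ = spanSingleton R⁰ lamI := by
    conv_lhs => rw [hJ'eq]
    rw [mul_assoc, hJinv, mul_one]
  -- generic step: scale a membership in spanSingleton e * T by c with c*e = 1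
  have step : ∀ (c e w : K) (T : FractionalIdeal R⁰ K), c * e = 1 →
      w ∈ spanSingleton R⁰ e * T → c * w ∈ T := by
    intro c e w T hce hw
    have h2 : c * w ∈ spanSingleton R⁰ c * (spanSingleton R⁰ e * T) :=
      mul_mem_mul (mem_spanSingleton_self _ _) hw
    rwa [← mul_assoc, spanSingleton_mul_spanSingleton, hce, spanSingleton_one, one_mul] at h2
  -- memberships of a, b, a', b'
  have haJ : a ∈ J * If⁻¹ := by
    have hle : spanSingleton R⁰ a ≤ J * If⁻¹ := by
      rw [← mul_one (spanSingleton R⁰ a), ← hIinv, ← mul_assoc]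
      exact mul_left_mono hle1
    exact hle (mem_spanSingleton_self _ _)
  have haJ' : a' ∈ J' * If⁻¹ := by
    have hle : spanSingleton R⁰ a' ≤ J' * If⁻¹ := by
      rw [← mul_one (spanSingleton R⁰ a'), ← hIinv, ← mul_assoc]
      exact mul_left_mono hle1'
    exact hle (mem_spanSingleton_self _ _)
  have hbJ : b ∈ J := hle2 (mem_spanSingleton_self _ _)
  have hb'J' : b' ∈ J' := hle2' (mem_spanSingleton_self _ _)
  -- the eight terms
  -- x = lamI*(a*p') + lamK*(q*b')
  have m1 : lamI * (a * p') ∈ (1 : FractionalIdeal R⁰ K) := by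
    refine step lamI lamK _ _ hll' ?_
    have h2 : a * p' ∈ J * J'⁻¹ := by
      have h3 := mul_mem_mul (mem_spanSingleton_self R⁰ a) hp'
      rw [← mul_assoc] at h3
      exact mul_left_mono hle1 h3
    rw [mul_one, ← hJJ']; exact h2
  have m2 : lamK * (q * b') ∈ (1 : FractionalIdeal R⁰ K) := by
    refine step lamK lamI _ _ hll ?_
    have h2 : b' * q ∈ J' * J⁻¹ := mul_mem_mul hb'J' hq
    rw [mul_one, ← hJ'J, mul_comm q b']; exact h2
  -- y = lamI*(a*q') - lamK*(q*a')
  have m3 : lamI * (a * q') ∈ If⁻¹ := by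
    refine step lamI lamK _ _ hll' ?_
    have h2 : a * q' ∈ (J * If⁻¹) * J'⁻¹ := mul_mem_mul haJ hq'
    have e3 : (J * If⁻¹) * J'⁻¹ = spanSingleton R⁰ lamK * If⁻¹ := by
      rw [mul_right_comm, hJJ']
    rwa [e3] at h2
  have m4 : lamK * (q * a') ∈ If⁻¹ := by
    refine step lamK lamI _ _ hll ?_
    have h2 : q * a' ∈ J⁻¹ * (J' * If⁻¹) := mul_mem_mul hq haJ'
    have e4 : J⁻¹ * (J' * If⁻¹) = spanSingleton R⁰ lamI * If⁻¹ := by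
      rw [← mul_assoc, mul_comm J⁻¹ J', hJ'J]
    rwa [e4] at h2
  -- z = lamI*(b*p') - lamK*(p*b')
  have m5 : lamI * (b * p') ∈ If := by
    refine step lamI lamK _ _ hll' ?_
    have h2 : b * p' ∈ J * (If * J'⁻¹) := mul_mem_mul hbJ hp'
    have e5 : J * (If * J'⁻¹) = spanSingleton R⁰ lamK * If := by
      rw [mul_left_comm, hJJ', mul_comm]
    rwa [e5] at h2
  have m6 : lamK * (p * b') ∈ If := by
    refine step lamK lamI _ _ hll ?_
    have h2 : p * b' ∈ (If * J⁻¹) * J' := mul_mem_mul hp hb'J'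
    have e6 : (If * J⁻¹) * J' = spanSingleton R⁰ lamI * If := by
      rw [mul_assoc, mul_comm J⁻¹ J', hJ'J, mul_comm]
    rwa [e6] at h2
  -- t = lamI*(b*q') + lamK*(p*a')
  have m7 : lamI * (b * q') ∈ (1 : FractionalIdeal R⁰ K) := by
    refine step lamI lamK _ _ hll' ?_
    have h2 : b * q' ∈ J * J'⁻¹ := mul_mem_mul hbJ hq'
    rw [mul_one, ← hJJ']; exact h2
  have m8 : lamK * (p * a') ∈ (1 : FractionalIdeal R⁰ K) := by
    refine step lamK lamI _ _ hll ?_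
    have h2 : p * a' ∈ (If * J⁻¹) * (J' * If⁻¹) := mul_mem_mul hp haJ'
    have e8 : (If * J⁻¹) * (J' * If⁻¹) = spanSingleton R⁰ lamI := by
      rw [show (If * J⁻¹) * (J' * If⁻¹) = (If * If⁻¹) * (J' * J⁻¹) by ring,
        hIinv, one_mul, hJ'J]
    rw [mul_one, ← e8]; exact h2
  -- assemble
  refine ⟨lamI * (a * p') + lamK * (q * b'),
          lamI * (a * q') - lamK * (q * a'),
          lamI * (b * p') - lamK * (p * b'),
          lamI * (b * q') + lamK * (p * a'), ?_, ?_, ?_, ?_, ?_, ?_⟩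
  · rw [← mem_coe] at m1 m2 ⊢
    exact Submodule.add_mem _ m1 m2
  · rw [← mem_coe] at m7 m8 ⊢
    exact Submodule.add_mem _ m7 m8
  · rw [← mem_coe] at m3 m4 ⊢
    exact Submodule.sub_mem _ m3 m4
  · rw [← mem_coe] at m5 m6 ⊢
    exact Submodule.sub_mem _ m5 m6
  · have key : (lamI * (a * p') + lamK * (q * b')) * (lamI * (b * q') + lamK * (p * a')) -
        (lamI * (a * q') - lamK * (q * a')) * (lamI * (b * p') - lamK * (p * b')) =
        (lamK * lamI) * ((a * p + b * q) * (a' * p' + b' * q')) := by ring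
    rw [key, hpq, hpq', hll, one_mul, mul_one]
  · refine ⟨lam⁻¹, ?_, ?_⟩
    · have key : (lamI * (a * p') + lamK * (q * b')) * a' +
          (lamI * (a * q') - lamK * (q * a')) * b' = lamI * a * (a' * p' + b' * q') := by ring
      rw [key, hpq', mul_one]
    · have key : (lamI * (b * p') - lamK * (p * b')) * a' +
          (lamI * (b * q') + lamK * (p * a')) * b' = lamI * b * (a' * p' + b' * q') := by ring
      rw [key, hpq', mul_one]
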